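/- Let $m > n$ be positive real numbers (or positive integers) and let $\nu$ be a nonnegative integer. Then $2^{-2\nu-1}\binom{2\nu+1}{\nu+1}\, m^{-1/2}(m^{1/2}-n^{1/2})^{2\nu+2} = \sum_{\mu=0}^{\nu}\binom{\nu+1/2}{\nu-\mu}\binom{\nu+1/2}{\mu} m^{\nu-\mu}\left(m^{\mu-2\nu-1/2}P_{3+2\nu,\,1/2-\mu}(m-n,\,n)-n^{1/2+\mu}\right)$, where $P_{a,b}(X,Y)=\sum_{j=0}^{a-2}\binom{j+b-2}{j}X^j(X+Y)^{a-j-2}$ and binomial coefficients with half-integer arguments are defined via the Gamma function. -/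

import Mathlib

/-- The generalized binomial coefficient `x choose k` for real `x` and natural `k`,
defined via the Gamma function: `Γ(x+1) / (Γ(k+1) Γ(x-k+1))`. -/
noncomputable def gammaBinom (x : ℝ) (k : ℕ) : ℝ :=
  Real.Gamma (x + 1) / (Real.Gamma ((k : ℝ) + 1) * Real.Gamma (x - (k : ℝ) + 1))

/-- The polynomial `P_{a,b}(X,Y) = ∑_{j=0}^{a-2} (j+b-2 choose j) X^j (X+Y)^{a-j-2}`. -/
noncomputable def Pab (a : ℕ) (b : ℝ) (X Y : ℝ) : ℝ :=
  ∑ j ∈ Finset.range (a - 1), gammaBinom ((j : ℝ) + b - 2) j * X ^ j * (X + Y) ^ (a - j - 2)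



open Finset Real


lemma Gamma_half_ne_zero (a : ℤ) : Real.Gamma ((a : ℝ) + 1/2) ≠ 0 := by
  apply Real.Gamma_ne_zero
  intro m h
  have h2 : (2*(a:ℝ) + 1) = -(2*(m:ℝ)) := by linarith
  have h3 : (2*a + 1 : ℤ) = -(2*(m:ℤ)) := by exact_mod_cast h2
  omega

lemma half_ne_int (μ : ℕ) (k : ℤ) : ((μ:ℝ) + 1/2) ≠ (k : ℝ) := by
  intro h
  have h2 : (2*(μ:ℝ) + 1) = 2*(k:ℝ) := by linarith
  have h3 : (2*(μ:ℤ) + 1) = 2*k := by exact_mod_cast h2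
  omega

lemma Gamma_nat_ne_zero (j : ℕ) : Real.Gamma ((j:ℝ)+1) ≠ 0 := by
  rw [Real.Gamma_nat_eq_factorial]
  positivity

lemma gammaBinom_zero (α : ℝ) (h : Real.Gamma (α+1) ≠ 0) : gammaBinom α 0 = 1 := by
  simp [gammaBinom, Real.Gamma_one]
  exact h

/-- derivative recursion: (j+1) C(α, j+1) = α C(α-1, j) -/
lemma gammaBinom_succ (α : ℝ) (hα : α ≠ 0) (j : ℕ) :
    ((j:ℝ)+1) * gammaBinom α (j+1) = α * gammaBinom (α-1) j := by
  unfold gammaBinom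
  have h1 : Real.Gamma (α + 1) = α * Real.Gamma α := Real.Gamma_add_one hα
  have h2 : Real.Gamma (((j+1 : ℕ):ℝ) + 1) = ((j:ℝ)+1) * Real.Gamma ((j:ℝ)+1) := by
    push_cast
    rw [show (j:ℝ) + 1 + 1 = ((j:ℝ)+1) + 1 by ring]
    exact Real.Gamma_add_one (by positivity)
  have h3 : α - ((j+1 : ℕ):ℝ) + 1 = α - 1 - (j:ℝ) + 1 := by push_cast; ring
  rw [h2, h3, h1, show α - 1 + 1 = α by ring, mul_assoc ((j:ℝ)+1)]
  rw [mul_div_assoc' ((j:ℝ)+1), mul_div_mul_left _ _ (by positivity : (j:ℝ)+1 ≠ 0),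
    mul_div_assoc]

lemma Gamma_shift (α : ℝ) (hα : ∀ i : ℕ, α - i ≠ 0) : ∀ i : ℕ,
    Real.Gamma (α + 1 - i) * Real.Gamma ((i:ℝ) - α) =
      (-1)^i * (Real.Gamma (α+1) * Real.Gamma (-α)) := by
  intro i
  induction i with
  | zero => simp
  | succ i ih =>
    have hne := hα i
    have e3 : (α + 1 - ((i+1:ℕ):ℝ)) = α - i := by push_cast; ring
    have e4 : (((i+1:ℕ)):ℝ) - α = ((i:ℝ) - α) + 1 := by push_cast; ring
    rw [e3, e4, Real.Gamma_add_one (show (i:ℝ) - α ≠ 0 by intro h; apply hne; linarith)]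
    have e2 : Real.Gamma (α + 1 - i) = (α - i) * Real.Gamma (α - i) := by
      rw [show α + 1 - (i:ℝ) = (α - i) + 1 by ring]; exact Real.Gamma_add_one hne
    rw [e2] at ih
    calc Real.Gamma (α - i) * (((i:ℝ) - α) * Real.Gamma ((i:ℝ) - α))
        = -((α - i) * Real.Gamma (α - i) * Real.Gamma ((i:ℝ) - α)) := by ring
      _ = -((-1)^i * (Real.Gamma (α+1) * Real.Gamma (-α))) := by linear_combination (-1:ℝ) * ih
      _ = (-1)^(i+1) * (Real.Gamma (α+1) * Real.Gamma (-α)) := by ring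

/-- upper negation -/
lemma gammaBinom_neg (μ : ℕ) (j : ℕ) :
    gammaBinom ((j:ℝ) + (1/2 - (μ:ℝ)) - 2) j = (-1)^j * gammaBinom ((μ:ℝ) + 1/2) j := by
  set α : ℝ := (μ:ℝ) + 1/2 with hαdef
  have key := Gamma_shift α (fun i h => half_ne_int μ i (by rw [hαdef] at h; push_cast; linarith)) j
  have hG1 : Real.Gamma (-α) ≠ 0 := by
    have : -α = ((-(μ:ℤ)-1 : ℤ):ℝ) + 1/2 := by push_cast; ring
    rw [this]; exact Gamma_half_ne_zero _
  have hG2 : Real.Gamma (α+1-j) ≠ 0 := by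
    have : α+1-(j:ℝ) = (((μ:ℤ)+1-(j:ℤ) : ℤ):ℝ) + 1/2 := by push_cast; ring
    rw [this]; exact Gamma_half_ne_zero _
  have hG3 := Gamma_nat_ne_zero j
  unfold gammaBinom
  rw [show (j:ℝ) + (1/2 - (μ:ℝ)) - 2 - (j:ℝ) + 1 = -α by rw [hαdef]; ring,
      show (j:ℝ) + (1/2 - (μ:ℝ)) - 2 + 1 = (j:ℝ) - α by rw [hαdef]; ring,
      show α - (j:ℝ) + 1 = α + 1 - j by ring]
  field_simp
  linear_combination key


lemma Gamma_add_three_halves (k : ℕ) :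
    Real.Gamma ((k:ℝ) + 3/2) =
      ((2*k+1).factorial : ℝ) * ((2:ℝ)^(2*k+1))⁻¹ * Real.sqrt π / (k.factorial : ℝ) := by
  have hd := Real.Gamma_mul_Gamma_add_half ((k:ℝ) + 1)
  have h1 : Real.Gamma ((k:ℝ)+1) = (k.factorial : ℝ) := Real.Gamma_nat_eq_factorial k
  have h2 : Real.Gamma (2*((k:ℝ)+1)) = ((2*k+1).factorial : ℝ) := by
    rw [show 2*((k:ℝ)+1) = ((2*k+1 : ℕ):ℝ) + 1 by push_cast; ring]
    exact Real.Gamma_nat_eq_factorial _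
  have h3 : (2:ℝ) ^ (1 - 2*((k:ℝ)+1)) = ((2:ℝ)^(2*k+1))⁻¹ := by
    rw [show (1 - 2*((k:ℝ)+1)) = (((-((2*k+1:ℕ):ℤ)) : ℤ) : ℝ) by push_cast; ring,
      Real.rpow_intCast, zpow_neg, zpow_natCast]
  rw [h1, h2, h3, show (k:ℝ) + 1 + 1/2 = (k:ℝ) + 3/2 by ring] at hd
  have hk : (k.factorial : ℝ) ≠ 0 := by positivity
  field_simp at hd ⊢
  linarith [hd]

lemma dup (ν μ : ℕ) (h : μ ≤ ν) :
    gammaBinom ((ν:ℝ)+1/2) (ν-μ) * gammaBinom ((ν:ℝ)+1/2) μ =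
      (2:ℝ)^(-(2*(ν:ℤ))-1) * ((2*ν+1).choose (ν+1) : ℝ) * (((2*ν+2).choose (2*μ+1) : ℝ)) := by
  obtain ⟨a, rfl⟩ : ∃ a, ν = μ + a := ⟨ν - μ, by omega⟩
  rw [show μ + a - μ = a by omega]
  unfold gammaBinom
  have A : Real.Gamma (((μ+a : ℕ):ℝ)+1/2+1) = ((2*(μ+a)+1).factorial : ℝ) *
      ((2:ℝ)^(2*(μ+a)+1))⁻¹ * Real.sqrt π / ((μ+a).factorial : ℝ) := by
    rw [show ((μ+a:ℕ):ℝ)+1/2+1 = ((μ+a:ℕ):ℝ)+3/2 by ring]; exact Gamma_add_three_halves _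
  have B : Real.Gamma (((μ+a : ℕ):ℝ)+1/2 - ((a:ℕ):ℝ) + 1) = ((2*μ+1).factorial : ℝ) *
      ((2:ℝ)^(2*μ+1))⁻¹ * Real.sqrt π / (μ.factorial : ℝ) := by
    rw [show ((μ+a:ℕ):ℝ)+1/2-((a:ℕ):ℝ)+1 = (μ:ℝ)+3/2 by push_cast; ring]
    exact Gamma_add_three_halves _
  have C : Real.Gamma (((μ+a : ℕ):ℝ)+1/2 - ((μ:ℕ):ℝ) + 1) = ((2*a+1).factorial : ℝ) *
      ((2:ℝ)^(2*a+1))⁻¹ * Real.sqrt π / (a.factorial : ℝ) := by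
    rw [show ((μ+a:ℕ):ℝ)+1/2-((μ:ℕ):ℝ)+1 = (a:ℝ)+3/2 by push_cast; ring]
    exact Gamma_add_three_halves _
  have D : Real.Gamma (((a:ℕ):ℝ)+1) = (a.factorial : ℝ) := Real.Gamma_nat_eq_factorial a
  have E : Real.Gamma (((μ:ℕ):ℝ)+1) = (μ.factorial : ℝ) := Real.Gamma_nat_eq_factorial μ
  rw [A, B, C, D, E]
  have F : ((2*(μ+a)+1).choose (μ+a+1) : ℝ) =
      ((2*(μ+a)+1).factorial : ℝ) / (((μ+a+1).factorial : ℝ) * ((μ+a).factorial : ℝ)) := by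
    rw [Nat.cast_choose ℝ (by omega : μ+a+1 ≤ 2*(μ+a)+1),
      show 2*(μ+a)+1 - (μ+a+1) = μ+a by omega]
  have G : ((2*(μ+a)+2).choose (2*μ+1) : ℝ) =
      ((2*(μ+a)+2).factorial : ℝ) / (((2*μ+1).factorial : ℝ) * ((2*a+1).factorial : ℝ)) := by
    rw [Nat.cast_choose ℝ (by omega : 2*μ+1 ≤ 2*(μ+a)+2),
      show 2*(μ+a)+2 - (2*μ+1) = 2*a+1 by omega]
  have H : (2:ℝ)^(-(2*((μ+a:ℕ):ℤ))-1) = ((2:ℝ)^(2*(μ+a)+1))⁻¹ := by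
    rw [show (-(2*((μ+a:ℕ):ℤ))-1) = -((2*(μ+a)+1 : ℕ) : ℤ) by push_cast; ring,
      zpow_neg, zpow_natCast]
  rw [F, G, H]
  have h1 : ((2*(μ+a)+2).factorial : ℝ) = (2*(μ+a)+2) * ((2*(μ+a)+1).factorial : ℝ) := by
    exact_mod_cast congrArg (Nat.cast (R := ℝ)) (Nat.factorial_succ (2*(μ+a)+1))
  have h2 : ((μ+a+1).factorial : ℝ) = (μ+a+1) * ((μ+a).factorial : ℝ) := by
    exact_mod_cast congrArg (Nat.cast (R := ℝ)) (Nat.factorial_succ (μ+a))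
  rw [h1, h2]
  have s1 : Real.sqrt π * Real.sqrt π = π := Real.mul_self_sqrt Real.pi_pos.le
  have n1 : (μ.factorial : ℝ) ≠ 0 := by positivity
  have n2 : (a.factorial : ℝ) ≠ 0 := by positivity
  have n3 : ((μ+a).factorial : ℝ) ≠ 0 := by positivity
  have n4 : ((2*μ+1).factorial : ℝ) ≠ 0 := by positivity
  have n5 : ((2*a+1).factorial : ℝ) ≠ 0 := by positivity
  have n6 : ((2*(μ+a)+1).factorial : ℝ) ≠ 0 := by positivity
  have n7 : Real.sqrt π ≠ 0 := by positivity
  have n8 : (2:ℝ) ≠ 0 := two_ne_zero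
  have n9 : ((μ:ℝ)+(a:ℝ)+1) ≠ 0 := by positivity
  field_simp
  push_cast
  ring_nf

lemma sum_range_even_odd (f : ℕ → ℝ) : ∀ M : ℕ,
    ∑ k ∈ range (2*M+1), f k =
      ∑ i ∈ range (M+1), f (2*i) + ∑ i ∈ range M, f (2*i+1) := by
  intro M
  induction M with
  | zero => simp
  | succ M ih =>
    have e1 : 2*(M+1)+1 = (2*M+1) + 1 + 1 := by omega
    rw [e1, Finset.sum_range_succ, Finset.sum_range_succ, ih,
      Finset.sum_range_succ (fun i => f (2*i)) (M+1),
      Finset.sum_range_succ (fun i => f (2*i+1)) M,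
      show 2*M+1+1 = 2*(M+1) by omega]
    ring

lemma pow_add_sub_pow_odd (ν : ℕ) (x : ℝ) :
    (1+x)^(2*ν+2) - (1-x)^(2*ν+2) =
      2 * ∑ μ ∈ range (ν+1), ((2*ν+2).choose (2*μ+1) : ℝ) * x^(2*μ+1) := by
  have hp : (1+x)^(2*ν+2) = ∑ k ∈ range (2*ν+3), ((2*ν+2).choose k : ℝ) * x^k := by
    rw [show (1+x) = (x+1) by ring, add_pow]
    apply Finset.sum_congr rfl
    intro k hk
    ring
  have hm : (1-x)^(2*ν+2) = ∑ k ∈ range (2*ν+3), ((2*ν+2).choose k : ℝ) * (-x)^k := by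
    rw [show (1-x) = ((-x)+1) by ring, add_pow]
    apply Finset.sum_congr rfl
    intro k hk
    ring
  rw [hp, hm, ← Finset.sum_sub_distrib]
  have := sum_range_even_odd (fun k => ((2*ν+2).choose k : ℝ) * x^k - ((2*ν+2).choose k : ℝ) * (-x)^k) (ν+1)
  rw [show 2*(ν+1)+1 = 2*ν+3 by omega] at this
  rw [this]
  have he : ∀ i, ((2*ν+2).choose (2*i) : ℝ) * x^(2*i) - ((2*ν+2).choose (2*i) : ℝ) * (-x)^(2*i) = 0 := by
    intro i
    rw [Even.neg_pow (even_two_mul i)]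
    ring
  rw [Finset.sum_congr rfl (fun i _ => he i), Finset.sum_const_zero, zero_add, Finset.mul_sum]
  apply Finset.sum_congr rfl
  intro i hi
  rw [Odd.neg_pow ⟨i, by omega⟩]
  ring

lemma pow_add_add_pow_even (ν : ℕ) (x : ℝ) :
    (1+x)^(2*ν+2) + (1-x)^(2*ν+2) =
      2 * ∑ i ∈ range (ν+2), ((2*ν+2).choose (2*i) : ℝ) * x^(2*i) := by
  have hp : (1+x)^(2*ν+2) = ∑ k ∈ range (2*ν+3), ((2*ν+2).choose k : ℝ) * x^k := by
    rw [show (1+x) = (x+1) by ring, add_pow]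
    exact Finset.sum_congr rfl (fun k hk => by ring)
  have hm : (1-x)^(2*ν+2) = ∑ k ∈ range (2*ν+3), ((2*ν+2).choose k : ℝ) * (-x)^k := by
    rw [show (1-x) = ((-x)+1) by ring, add_pow]
    exact Finset.sum_congr rfl (fun k hk => by ring)
  rw [hp, hm, ← Finset.sum_add_distrib]
  have := sum_range_even_odd (fun k => ((2*ν+2).choose k : ℝ) * x^k + ((2*ν+2).choose k : ℝ) * (-x)^k) (ν+1)
  rw [show 2*(ν+1)+1 = 2*ν+3 by omega] at this
  rw [this]
  have ho : ∀ i, ((2*ν+2).choose (2*i+1) : ℝ) * x^(2*i+1) + ((2*ν+2).choose (2*i+1) : ℝ) * (-x)^(2*i+1) = 0 := by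
    intro i
    rw [Odd.neg_pow ⟨i, by omega⟩]
    ring
  rw [Finset.sum_congr rfl (fun i _ => ho i), Finset.sum_const_zero, add_zero, Finset.mul_sum]
  refine Finset.sum_congr rfl (fun i hi => ?_)
  rw [Even.neg_pow (even_two_mul i)]
  ring

lemma small_le_zero (a C : ℝ) (h : ∀ ε : ℝ, 0 < ε → ε < 1/2 → a ≤ C * ε) : a ≤ 0 := by
  by_contra hc
  push_neg at hc
  rcases le_or_gt C 0 with hC | hC
  · have := h (1/4) (by norm_num) (by norm_num)
    nlinarith
  · have hε : 0 < min (1/4) (a/(2*C)) := by positivity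
    have := h _ hε (lt_of_le_of_lt (min_le_left _ _) (by norm_num))
    have h2 : C * min (1/4) (a/(2*C)) ≤ C * (a/(2*C)) := by
      apply mul_le_mul_of_nonneg_left (min_le_right _ _) hC.le
    have h3 : C * (a/(2*C)) = a/2 := by field_simp
    rw [h3] at h2
    linarith

lemma vanish : ∀ (N : ℕ) (d : ℕ → ℝ) (K : ℝ),
    (∀ y : ℝ, y ∈ Set.Ioo (-(1/2) : ℝ) 0 → |∑ j ∈ range N, d j * y^j| ≤ K * |y|^N) →
    ∀ j < N, d j = 0 := by
  intro N
  induction N with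
  | zero => intro d K h j hj; omega
  | succ N ih =>
    intro d K h
    have hd0 : d 0 = 0 := by
      have hb : ∀ y : ℝ, y ∈ Set.Ioo (-(1/2) : ℝ) 0 →
          |d 0| ≤ (|K| + ∑ j ∈ range N, |d (j+1)|) * |y| := by
        intro y hy
        have hy1 : |y| ≤ 1 := by
          rw [abs_le]; constructor <;> [linarith [hy.1]; linarith [hy.2]]
        have hy0 : 0 ≤ |y| := abs_nonneg y
        have e1 : ∑ j ∈ range (N+1), d j * y^j = d 0 + ∑ j ∈ range N, d (j+1) * y^(j+1) := by
          rw [Finset.sum_range_succ' (fun j => d j * y^j) N]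
          simp [add_comm]
        have h2 := h y hy
        rw [e1] at h2
        have h3 : |d 0| ≤ |d 0 + ∑ j ∈ range N, d (j+1) * y^(j+1)| + |∑ j ∈ range N, d (j+1) * y^(j+1)| := by
          have h := abs_add_le (d 0 + ∑ j ∈ range N, d (j+1) * y^(j+1)) (-(∑ j ∈ range N, d (j+1) * y^(j+1)))
          rw [add_neg_cancel_right, abs_neg] at h
          exact h
        have h4 : |∑ j ∈ range N, d (j+1) * y^(j+1)| ≤ (∑ j ∈ range N, |d (j+1)|) * |y| := by
          calc |∑ j ∈ range N, d (j+1) * y^(j+1)| ≤ ∑ j ∈ range N, |d (j+1) * y^(j+1)| :=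
                Finset.abs_sum_le_sum_abs _ _
            _ ≤ ∑ j ∈ range N, |d (j+1)| * |y| := by
                apply Finset.sum_le_sum
                intro j hj
                rw [abs_mul, abs_pow]
                apply mul_le_mul_of_nonneg_left _ (abs_nonneg _)
                calc |y|^(j+1) ≤ |y|^1 := pow_le_pow_of_le_one hy0 hy1 (by omega)
                  _ = |y| := pow_one _
            _ = (∑ j ∈ range N, |d (j+1)|) * |y| := by rw [Finset.sum_mul]
        have h5 : K * |y|^(N+1) ≤ |K| * |y| := by
          calc K * |y|^(N+1) ≤ |K| * |y|^(N+1) := by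
                apply mul_le_mul_of_nonneg_right (le_abs_self K) (by positivity)
            _ ≤ |K| * |y| := by
                apply mul_le_mul_of_nonneg_left _ (abs_nonneg K)
                calc |y|^(N+1) ≤ |y|^1 := pow_le_pow_of_le_one hy0 hy1 (by omega)
                  _ = |y| := pow_one _
        calc |d 0| ≤ |d 0 + ∑ j ∈ range N, d (j+1) * y^(j+1)| + |∑ j ∈ range N, d (j+1) * y^(j+1)| := h3
          _ ≤ K * |y|^(N+1) + (∑ j ∈ range N, |d (j+1)|) * |y| := add_le_add h2 h4
          _ ≤ |K| * |y| + (∑ j ∈ range N, |d (j+1)|) * |y| := by linarith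
          _ = (|K| + ∑ j ∈ range N, |d (j+1)|) * |y| := by ring
      have : |d 0| ≤ 0 := by
        apply small_le_zero _ (|K| + ∑ j ∈ range N, |d (j+1)|)
        intro ε hε hε2
        have := hb (-ε) ⟨by linarith, by linarith⟩
        rwa [abs_neg, abs_of_pos hε] at this
      exact abs_eq_zero.mp (le_antisymm this (abs_nonneg _))
    have hstep : ∀ y : ℝ, y ∈ Set.Ioo (-(1/2) : ℝ) 0 →
        |∑ j ∈ range N, d (j+1) * y^j| ≤ K * |y|^N := by
      intro y hy
      have hyne : y ≠ 0 := ne_of_lt hy.2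
      have e1 : ∑ j ∈ range (N+1), d j * y^j = y * ∑ j ∈ range N, d (j+1) * y^j := by
        rw [Finset.sum_range_succ' (fun j => d j * y^j) N, hd0, Finset.mul_sum]
        simp only [zero_mul, add_zero]
        exact Finset.sum_congr rfl (fun j hj => by ring)
      have h2 := h y hy
      rw [e1, abs_mul] at h2
      have : |y| * |∑ j ∈ range N, d (j+1) * y^j| ≤ (K * |y|^N) * |y| := by
        rw [pow_succ] at h2
        linarith [h2]
      have hypos : 0 < |y| := abs_pos.mpr hyne
      have this2 : |y| * |∑ j ∈ range N, d (j+1) * y^j| ≤ |y| * (K * |y|^N) := by linarith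
      exact le_of_mul_le_mul_left this2 hypos
    intro j hj
    rcases j with _ | j
    · exact hd0
    · exact ih (fun j => d (j+1)) K hstep j (by omega)

lemma rpow_base_bound (β : ℝ) (t : ℝ) (ht : t ∈ Set.Icc (-(1/2):ℝ) 0) :
    (1+t)^β ≤ (1/2:ℝ)^β + 1 := by
  obtain ⟨h1, h2⟩ := ht
  rcases le_or_gt 0 β with hβ | hβ
  · have h3 := Real.rpow_le_one (by linarith : (0:ℝ) ≤ 1+t) (by linarith) hβ
    have h0 : (0:ℝ) ≤ (1/2:ℝ)^β := Real.rpow_nonneg (by norm_num) β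
    linarith
  · have h3 := Real.rpow_le_rpow_of_nonpos (by norm_num : (0:ℝ) < 1/2)
      (show (1/2:ℝ) ≤ 1+t by linarith) hβ.le
    linarith

lemma hasDerivAt_rem (α : ℝ) (hα : α ≠ 0) (N : ℕ) (t : ℝ) (ht : (0:ℝ) < 1 + t) :
    HasDerivAt (fun y => (1+y)^α - ∑ j ∈ range (N+1), gammaBinom α j * y^j)
      (α * ((1+t)^(α-1) - ∑ j ∈ range N, gammaBinom (α-1) j * t^j)) t := by
  have h1 : HasDerivAt (fun y : ℝ => (1+y)^α) (α * (1+t)^(α-1)) t := by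
    have := (HasDerivAt.rpow_const (p := α) ((hasDerivAt_id t).const_add 1) (Or.inl (ne_of_gt ht)))
    simpa using this
  have h2 : HasDerivAt (fun y : ℝ => ∑ j ∈ range (N+1), gammaBinom α j * y^j)
      (∑ j ∈ range (N+1), gammaBinom α j * (j * t^(j-1))) t := by
    apply HasDerivAt.fun_sum
    intro j hj
    exact (hasDerivAt_pow j t).const_mul _
  have e : ∑ j ∈ range (N+1), gammaBinom α j * (j * t^(j-1)) =
      α * ∑ j ∈ range N, gammaBinom (α-1) j * t^j := by
    rw [Finset.sum_range_succ' (fun j => gammaBinom α j * (j * t^(j-1))) N]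
    simp only [Nat.cast_zero, zero_mul, mul_zero, add_zero]
    rw [Finset.mul_sum]
    apply Finset.sum_congr rfl
    intro j hj
    have hs := gammaBinom_succ α hα j
    have hc : (((j+1:ℕ)):ℝ) = (j:ℝ)+1 := by push_cast; ring
    rw [show (j+1) - 1 = j from rfl, hc]
    linear_combination t^j * hs
  rw [e] at h2
  have h3 := h1.sub h2
  refine h3.congr_deriv ?_
  ring

lemma rem : ∀ (N : ℕ) (α : ℝ), (∀ k : ℤ, α ≠ (k:ℝ)) →
    ∃ K : ℝ, 0 ≤ K ∧ ∀ y ∈ Set.Icc (-(1/2):ℝ) 0,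
      |(1+y) ^ α - ∑ j ∈ range (N+1), gammaBinom α j * y^j| ≤ K * |y|^(N+1) := by
  intro N
  induction N with
  | zero =>
    intro α hα
    have hα0 : α ≠ 0 := fun h => hα 0 (by exact_mod_cast h)
    have hΓ : Real.Gamma (α+1) ≠ 0 :=
      Real.Gamma_ne_zero (fun m hm => hα (-(m:ℤ)-1) (by push_cast; linarith))
    refine ⟨|α| * ((1/2:ℝ)^(α-1) + 1), by positivity, ?_⟩
    intro y hy
    obtain ⟨hy1, hy2⟩ := hy
    have hsub : Set.Icc y 0 ⊆ Set.Icc (-(1/2):ℝ) 0 :=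
      Set.Icc_subset_Icc (by linarith) le_rfl
    have hder : ∀ t ∈ Set.Icc y 0,
        HasDerivWithinAt (fun y => (1+y)^α - ∑ j ∈ range 1, gammaBinom α j * y^j)
          (α * ((1+t)^(α-1) - ∑ j ∈ range 0, gammaBinom (α-1) j * t^j)) (Set.Icc y 0) t := by
      intro t ht
      have ht' := hsub ht
      exact (hasDerivAt_rem α hα0 0 t (by have := ht'.1; norm_num at this ⊢; linarith)).hasDerivWithinAt
    have hbound : ∀ t ∈ Set.Icc y 0,
        ‖α * ((1+t)^(α-1) - ∑ j ∈ range 0, gammaBinom (α-1) j * t^j)‖ ≤ |α| * ((1/2:ℝ)^(α-1) + 1) := by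
      intro t ht
      have ht' := hsub ht
      rw [Finset.range_zero, Finset.sum_empty, sub_zero, Real.norm_eq_abs, abs_mul]
      apply mul_le_mul_of_nonneg_left _ (abs_nonneg α)
      rw [abs_of_nonneg (Real.rpow_nonneg (by have := ht'.1; norm_num at this; linarith) _)]
      exact rpow_base_bound (α-1) t ht'
    have hMVT := (convex_Icc y 0).norm_image_sub_le_of_norm_hasDerivWithin_le
      hder hbound (Set.right_mem_Icc.mpr hy2) (Set.left_mem_Icc.mpr hy2)
    simp only [Real.norm_eq_abs] at hMVT
    have hf0 : ((1:ℝ)+0)^α - ∑ j ∈ range 1, gammaBinom α j * (0:ℝ)^j = 0 := by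
      rw [Finset.sum_range_one]
      simp [Real.one_rpow, gammaBinom_zero α hΓ]
    rw [hf0, sub_zero, sub_zero] at hMVT
    calc |(1+y) ^ α - ∑ j ∈ range 1, gammaBinom α j * y^j| ≤ |α| * ((1/2:ℝ)^(α-1) + 1) * |y| := hMVT
      _ = |α| * ((1/2:ℝ)^(α-1) + 1) * |y|^(0+1) := by rw [pow_one]
  | succ N ihN =>
    intro α hα
    have hα0 : α ≠ 0 := fun h => hα 0 (by exact_mod_cast h)
    have hΓ : Real.Gamma (α+1) ≠ 0 :=
      Real.Gamma_ne_zero (fun m hm => hα (-(m:ℤ)-1) (by push_cast; linarith))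
    obtain ⟨K', hK'0, hK'⟩ := ihN (α-1) (fun k h => hα (k+1) (by push_cast; linarith))
    refine ⟨|α| * K', by positivity, ?_⟩
    intro y hy
    obtain ⟨hy1, hy2⟩ := hy
    have hsub : Set.Icc y 0 ⊆ Set.Icc (-(1/2):ℝ) 0 :=
      Set.Icc_subset_Icc (by linarith) le_rfl
    have hder : ∀ t ∈ Set.Icc y 0,
        HasDerivWithinAt (fun y => (1+y)^α - ∑ j ∈ range (N+2), gammaBinom α j * y^j)
          (α * ((1+t)^(α-1) - ∑ j ∈ range (N+1), gammaBinom (α-1) j * t^j)) (Set.Icc y 0) t := by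
      intro t ht
      have ht' := hsub ht
      exact (hasDerivAt_rem α hα0 (N+1) t (by have := ht'.1; norm_num at this ⊢; linarith)).hasDerivWithinAt
    have hbound : ∀ t ∈ Set.Icc y 0,
        ‖α * ((1+t)^(α-1) - ∑ j ∈ range (N+1), gammaBinom (α-1) j * t^j)‖ ≤ |α| * (K' * |y|^(N+1)) := by
      intro t ht
      have ht' := hsub ht
      rw [Real.norm_eq_abs, abs_mul]
      apply mul_le_mul_of_nonneg_left _ (abs_nonneg α)
      calc |(1+t)^(α-1) - ∑ j ∈ range (N+1), gammaBinom (α-1) j * t^j| ≤ K' * |t|^(N+1) :=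
            hK' t ht'
        _ ≤ K' * |y|^(N+1) := by
            apply mul_le_mul_of_nonneg_left _ hK'0
            apply pow_le_pow_left₀ (abs_nonneg t)
            rw [abs_of_nonpos ht.2, abs_of_nonpos hy2]
            linarith [ht.1]
    have hMVT := (convex_Icc y 0).norm_image_sub_le_of_norm_hasDerivWithin_le
      hder hbound (Set.right_mem_Icc.mpr hy2) (Set.left_mem_Icc.mpr hy2)
    simp only [Real.norm_eq_abs] at hMVT
    have hf0 : ((1:ℝ)+0)^α - ∑ j ∈ range (N+2), gammaBinom α j * (0:ℝ)^j = 0 := by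
      rw [Finset.sum_range_succ' (fun j => gammaBinom α j * (0:ℝ)^j) (N+1)]
      simp [Real.one_rpow, gammaBinom_zero α hΓ]
    rw [hf0, sub_zero, sub_zero] at hMVT
    calc |(1+y) ^ α - ∑ j ∈ range (N+2), gammaBinom α j * y^j|
        ≤ |α| * (K' * |y|^(N+1)) * |y| := hMVT
      _ = |α| * K' * |y|^(N+1+1) := by rw [pow_succ]; ring

lemma core (ν : ℕ) (u : ℝ) (hu0 : 0 < u) (hu1 : u < 1) :
    ∑ μ ∈ range (ν+1), gammaBinom ((ν:ℝ)+1/2) (ν-μ) * gammaBinom ((ν:ℝ)+1/2) μ *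
      ((∑ j ∈ range (2*ν+2), gammaBinom ((j:ℝ) + (1/2 - (μ:ℝ)) - 2) j * (1 - u^2)^j) - u^(2*μ+1))
    = (2:ℝ)^(-(2*(ν:ℤ))-1) * ((2*ν+1).choose (ν+1) : ℝ) * (1-u)^(2*ν+2) := by
  set c : ℝ := (2:ℝ)^(-(2*(ν:ℤ))-1) * ((2*ν+1).choose (ν+1) : ℝ) with hcdef
  have hc : 0 ≤ c := by rw [hcdef]; positivity
  set B : ℕ → ℝ := fun μ => gammaBinom ((ν:ℝ)+1/2) (ν-μ) * gammaBinom ((ν:ℝ)+1/2) μ with hBdef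
  set A : ℕ → ℝ := fun j => ∑ μ ∈ range (ν+1), B μ * gammaBinom ((μ:ℝ)+1/2) j with hAdef
  set e : ℕ → ℝ := fun j =>
    c * ∑ i ∈ range (ν+2), ((2*ν+2).choose (2*i) : ℝ) * ((i.choose j : ℝ)) with hedef
  -- rewrite the inner sums via upper negation
  have hstepA : ∀ (μ : ℕ) (z : ℝ), (∑ j ∈ range (2*ν+2), gammaBinom ((j:ℝ)+(1/2-(μ:ℝ))-2) j * (1 - (1+z))^j)
      = ∑ j ∈ range (2*ν+2), gammaBinom ((μ:ℝ)+1/2) j * z^j := by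
    intro μ z
    apply Finset.sum_congr rfl
    intro j _
    rw [gammaBinom_neg μ j, show (1 - (1+z)) = (-1) * z by ring, mul_pow]
    have hsq : ((-1:ℝ))^j * ((-1:ℝ))^j = 1 := by rw [← mul_pow]; norm_num
    linear_combination gammaBinom ((μ:ℝ)+1/2) j * z^j * hsq
  -- swap order of summation
  have hswap : ∀ z : ℝ,
      ∑ μ ∈ range (ν+1), B μ * ∑ j ∈ range (2*ν+2), gammaBinom ((μ:ℝ)+1/2) j * z^j
      = ∑ j ∈ range (2*ν+2), A j * z^j := by
    intro z
    simp_rw [Finset.mul_sum]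
    rw [Finset.sum_comm]
    apply Finset.sum_congr rfl
    intro j _
    simp only [hAdef]
    rw [Finset.sum_mul]
    exact Finset.sum_congr rfl (fun μ _ => by ring)
  -- the e-polynomial sums to the even part expression
  have hQ : ∀ z : ℝ, ∑ j ∈ range (2*ν+2), e j * z^j
      = c * ∑ i ∈ range (ν+2), ((2*ν+2).choose (2*i) : ℝ) * (1+z)^i := by
    intro z
    have hexp : ∀ i ∈ range (ν+2), (1+z)^i = ∑ j ∈ range (2*ν+2), ((i.choose j : ℝ)) * z^j := by
      intro i hi
      have hi' : i + 1 ≤ 2*ν+2 := by have := Finset.mem_range.mp hi; omega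
      rw [show (1+z) = (z+1) by ring, add_pow]
      simp only [one_pow, mul_one]
      rw [Finset.sum_subset (Finset.range_subset_range.mpr hi')]
      · exact Finset.sum_congr rfl (fun k _ => by ring)
      · intro k hk hknot
        rw [Nat.choose_eq_zero_of_lt (by simp only [Finset.mem_range] at hk hknot; omega)]
        simp
    calc ∑ j ∈ range (2*ν+2), e j * z^j
        = ∑ j ∈ range (2*ν+2), ∑ i ∈ range (ν+2),
            c * (((2*ν+2).choose (2*i) : ℝ) * (((i.choose j : ℝ)) * z^j)) := by
          apply Finset.sum_congr rfl
          intro j _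
          simp only [hedef]
          rw [Finset.mul_sum, Finset.sum_mul]
          exact Finset.sum_congr rfl (fun i _ => by ring)
      _ = ∑ i ∈ range (ν+2), ∑ j ∈ range (2*ν+2),
            c * (((2*ν+2).choose (2*i) : ℝ) * (((i.choose j : ℝ)) * z^j)) := Finset.sum_comm
      _ = c * ∑ i ∈ range (ν+2), ((2*ν+2).choose (2*i) : ℝ) * (1+z)^i := by
          rw [Finset.mul_sum]
          apply Finset.sum_congr rfl
          intro i hi
          rw [hexp i hi, Finset.mul_sum, Finset.mul_sum]
  -- odd part via dup
  have hF : ∀ w : ℝ, ∑ μ ∈ range (ν+1), B μ * w^(2*μ+1)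
      = c/2 * ((1+w)^(2*ν+2) - (1-w)^(2*ν+2)) := by
    intro w
    have hterm : ∀ μ ∈ range (ν+1), B μ * w^(2*μ+1)
        = c * (((2*ν+2).choose (2*μ+1) : ℝ) * w^(2*μ+1)) := by
      intro μ hμ
      simp only [hBdef]
      rw [dup ν μ (by have := Finset.mem_range.mp hμ; omega), hcdef]
      ring
    calc ∑ μ ∈ range (ν+1), B μ * w^(2*μ+1)
        = ∑ μ ∈ range (ν+1), c * (((2*ν+2).choose (2*μ+1) : ℝ) * w^(2*μ+1)) :=
          Finset.sum_congr rfl hterm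
      _ = c * ∑ μ ∈ range (ν+1), ((2*ν+2).choose (2*μ+1) : ℝ) * w^(2*μ+1) := by
          rw [Finset.mul_sum]
      _ = c/2 * ((1+w)^(2*ν+2) - (1-w)^(2*ν+2)) := by
          rw [pow_add_sub_pow_odd ν w]; ring
  have hQw : ∀ w : ℝ, c * ∑ i ∈ range (ν+2), ((2*ν+2).choose (2*i) : ℝ) * w^(2*i)
      = c/2 * ((1+w)^(2*ν+2) + (1-w)^(2*ν+2)) := by
    intro w
    rw [pow_add_add_pow_even ν w]; ring
  -- the key polynomial identity A j = e j
  have hAe : ∀ j < 2*ν+2, A j - e j = 0 := by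
    have hKμ : ∀ μ : ℕ, ∃ K, 0 ≤ K ∧ ∀ z ∈ Set.Icc (-(1/2):ℝ) 0,
        |(1+z)^((μ:ℝ)+1/2) - ∑ j ∈ range (2*ν+2), gammaBinom ((μ:ℝ)+1/2) j * z^j| ≤ K*|z|^(2*ν+2) := by
      intro μ
      have := rem (2*ν+1) ((μ:ℝ)+1/2) (half_ne_int μ)
      simpa only [show 2*ν+1+1 = 2*ν+2 by omega] using this
    choose Kf hKf0 hKfb using hKμ
    apply vanish (2*ν+2) (fun j => A j - e j) ((∑ μ ∈ range (ν+1), |B μ| * Kf μ) + c)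
    intro z hz
    obtain ⟨hz1, hz2⟩ := hz
    set w := Real.sqrt (1+z) with hwdef
    have h1z : (0:ℝ) < 1 + z := by linarith
    have hw0 : 0 < w := Real.sqrt_pos.mpr h1z
    have hw1 : w ≤ 1 := by
      have h := Real.sqrt_le_sqrt (show 1+z ≤ 1 by linarith)
      rwa [Real.sqrt_one] at h
    have hw2 : w^2 = 1+z := Real.sq_sqrt h1z.le
    have hwp : ∀ μ : ℕ, (1+z)^((μ:ℝ)+1/2) = w^(2*μ+1) := by
      intro μ
      have e1 : (1+z)^((μ:ℝ)+1/2) = (1+z)^(μ:ℕ) * Real.sqrt (1+z) := by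
        rw [Real.rpow_add h1z, Real.rpow_natCast, Real.sqrt_eq_rpow]
      rw [e1, ← hwdef, ← hw2, ← pow_mul, ← pow_succ]
    -- first bound: A-sum vs F
    have hb1 : |(∑ j ∈ range (2*ν+2), A j * z^j) - ∑ μ ∈ range (ν+1), B μ * (1+z)^((μ:ℝ)+1/2)|
        ≤ (∑ μ ∈ range (ν+1), |B μ| * Kf μ) * |z|^(2*ν+2) := by
      rw [← hswap z, ← Finset.sum_sub_distrib]
      refine le_trans (Finset.abs_sum_le_sum_abs _ _) ?_
      rw [Finset.sum_mul]
      apply Finset.sum_le_sum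
      intro μ _
      rw [show B μ * (∑ j ∈ range (2*ν+2), gammaBinom ((μ:ℝ)+1/2) j * z^j)
            - B μ * (1+z)^((μ:ℝ)+1/2)
          = B μ * ((∑ j ∈ range (2*ν+2), gammaBinom ((μ:ℝ)+1/2) j * z^j)
            - (1+z)^((μ:ℝ)+1/2)) by ring, abs_mul, mul_assoc]
      apply mul_le_mul_of_nonneg_left _ (abs_nonneg _)
      rw [abs_sub_comm]
      exact hKfb μ z ⟨hz1.le, hz2.le⟩
    -- second piece: F minus e-polynomial is exactly -c(1-w)^(2ν+2)
    have hb2 : (∑ μ ∈ range (ν+1), B μ * (1+z)^((μ:ℝ)+1/2)) - ∑ j ∈ range (2*ν+2), e j * z^j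
        = -(c * (1-w)^(2*ν+2)) := by
      have l1 : ∑ μ ∈ range (ν+1), B μ * (1+z)^((μ:ℝ)+1/2)
          = ∑ μ ∈ range (ν+1), B μ * w^(2*μ+1) :=
        Finset.sum_congr rfl (fun μ _ => by rw [hwp μ])
      have l2 : ∑ i ∈ range (ν+2), ((2*ν+2).choose (2*i) : ℝ) * (1+z)^i
          = ∑ i ∈ range (ν+2), ((2*ν+2).choose (2*i) : ℝ) * w^(2*i) :=
        Finset.sum_congr rfl (fun i _ => by rw [← hw2, ← pow_mul])
      rw [l1, hF w, hQ z, l2, hQw w]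
      ring
    have hb2' : |(∑ μ ∈ range (ν+1), B μ * (1+z)^((μ:ℝ)+1/2)) - ∑ j ∈ range (2*ν+2), e j * z^j|
        ≤ c * |z|^(2*ν+2) := by
      rw [hb2, abs_neg, abs_mul, abs_of_nonneg hc,
        abs_of_nonneg (pow_nonneg (by linarith : (0:ℝ) ≤ 1-w) _)]
      apply mul_le_mul_of_nonneg_left _ hc
      apply pow_le_pow_left₀ (by linarith : (0:ℝ) ≤ 1-w)
      nlinarith [abs_of_neg hz2, hw0, hw2]
    -- combine
    have hsplit : ∑ j ∈ range (2*ν+2), (A j - e j) * z^j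
        = ((∑ j ∈ range (2*ν+2), A j * z^j) - ∑ μ ∈ range (ν+1), B μ * (1+z)^((μ:ℝ)+1/2))
          + ((∑ μ ∈ range (ν+1), B μ * (1+z)^((μ:ℝ)+1/2)) - ∑ j ∈ range (2*ν+2), e j * z^j) := by
      have hthis : ∑ j ∈ range (2*ν+2), (A j - e j) * z^j
          = (∑ j ∈ range (2*ν+2), A j * z^j) - ∑ j ∈ range (2*ν+2), e j * z^j := by
        rw [← Finset.sum_sub_distrib]
        exact Finset.sum_congr rfl (fun j _ => by ring)
      rw [hthis]
      ring
    calc |∑ j ∈ range (2*ν+2), (A j - e j) * z^j|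
        ≤ |(∑ j ∈ range (2*ν+2), A j * z^j) - ∑ μ ∈ range (ν+1), B μ * (1+z)^((μ:ℝ)+1/2)|
          + |(∑ μ ∈ range (ν+1), B μ * (1+z)^((μ:ℝ)+1/2)) - ∑ j ∈ range (2*ν+2), e j * z^j| := by
          rw [hsplit]; exact abs_add_le _ _
      _ ≤ (∑ μ ∈ range (ν+1), |B μ| * Kf μ) * |z|^(2*ν+2) + c * |z|^(2*ν+2) :=
          add_le_add hb1 hb2'
      _ = ((∑ μ ∈ range (ν+1), |B μ| * Kf μ) + c) * |z|^(2*ν+2) := by ring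
  -- final assembly
  have key : ∀ j ∈ range (2*ν+2), A j = e j := by
    intro j hj
    have := hAe j (Finset.mem_range.mp hj)
    linarith
  have hy1 : (0:ℝ) < 1 + (u^2 - 1) := by nlinarith
  have hrw1 : ∀ μ : ℕ, (∑ j ∈ range (2*ν+2), gammaBinom ((j:ℝ)+(1/2-(μ:ℝ))-2) j * (1 - u^2)^j)
      = ∑ j ∈ range (2*ν+2), gammaBinom ((μ:ℝ)+1/2) j * (u^2-1)^j := by
    intro μ
    have := hstepA μ (u^2-1)
    rw [show (1 - (1 + (u^2-1))) = 1 - u^2 by ring] at this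
    exact this
  calc ∑ μ ∈ range (ν+1), B μ *
        ((∑ j ∈ range (2*ν+2), gammaBinom ((j:ℝ)+(1/2-(μ:ℝ))-2) j * (1 - u^2)^j) - u^(2*μ+1))
      = (∑ μ ∈ range (ν+1), B μ * ∑ j ∈ range (2*ν+2), gammaBinom ((μ:ℝ)+1/2) j * (u^2-1)^j)
        - ∑ μ ∈ range (ν+1), B μ * u^(2*μ+1) := by
        rw [← Finset.sum_sub_distrib]
        exact Finset.sum_congr rfl (fun μ _ => by rw [hrw1 μ]; ring)
    _ = (∑ j ∈ range (2*ν+2), e j * (u^2-1)^j) - ∑ μ ∈ range (ν+1), B μ * u^(2*μ+1) := by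
        rw [hswap (u^2-1)]
        congr 1
        exact Finset.sum_congr rfl (fun j hj => by rw [key j hj])
    _ = c/2 * ((1+u)^(2*ν+2) + (1-u)^(2*ν+2)) - c/2 * ((1+u)^(2*ν+2) - (1-u)^(2*ν+2)) := by
        rw [hQ (u^2-1), hF u]
        congr 1
        have l3 : ∑ i ∈ range (ν+2), ((2*ν+2).choose (2*i) : ℝ) * (1+(u^2-1))^i
            = ∑ i ∈ range (ν+2), ((2*ν+2).choose (2*i) : ℝ) * u^(2*i) :=
          Finset.sum_congr rfl (fun i _ => by
            rw [show (1+(u^2-1)) = u^2 by ring, ← pow_mul])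
        rw [l3, hQw u]
    _ = c * (1-u)^(2*ν+2) := by ring

/-- For reals `m > n > 0` and a nonnegative integer `ν`,
`2^{-2ν-1} C(2ν+1,ν+1) m^{-1/2}(m^{1/2}-n^{1/2})^{2ν+2}
  = ∑_{μ=0}^{ν} (ν+1/2 choose ν-μ)(ν+1/2 choose μ) m^{ν-μ}
      (m^{μ-2ν-1/2} P_{3+2ν, 1/2-μ}(m-n, n) - n^{1/2+μ})`. -/
theorem explicit_pihol_poly (m n : ℝ) (hn : 0 < n) (hmn : n < m) (ν : ℕ) :
    (2 : ℝ) ^ (-(2 * (ν : ℤ)) - 1) * ((2 * ν + 1).choose (ν + 1) : ℝ) *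
        (m ^ (-(1 / 2) : ℝ) * (m ^ ((1 : ℝ) / 2) - n ^ ((1 : ℝ) / 2)) ^ (2 * ν + 2)) =
      ∑ μ ∈ Finset.range (ν + 1),
        gammaBinom ((ν : ℝ) + 1 / 2) (ν - μ) * gammaBinom ((ν : ℝ) + 1 / 2) μ *
          m ^ (ν - μ) *
          (m ^ ((μ : ℝ) - 2 * (ν : ℝ) - 1 / 2) * Pab (3 + 2 * ν) (1 / 2 - (μ : ℝ)) (m - n) n -
            n ^ ((1 : ℝ) / 2 + (μ : ℝ))) := by
  have hm : 0 < m := hn.trans hmn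
  set s : ℝ := m ^ ((1:ℝ)/2) with hsdef
  set t : ℝ := n ^ ((1:ℝ)/2) with htdef
  have hs : 0 < s := Real.rpow_pos_of_pos hm _
  have ht : 0 < t := Real.rpow_pos_of_pos hn _
  have hts : t < s := by
    rw [hsdef, htdef]
    exact Real.rpow_lt_rpow hn.le hmn (by norm_num)
  set u : ℝ := t/s with hudef
  have hu0 : 0 < u := div_pos ht hs
  have hu1 : u < 1 := (div_lt_one hs).mpr hts
  have hs2 : s^2 = m := by
    rw [hsdef, ← Real.rpow_natCast (m ^ ((1:ℝ)/2)) 2, ← Real.rpow_mul hm.le]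
    norm_num
  have ht2 : t^2 = n := by
    rw [htdef, ← Real.rpow_natCast (n ^ ((1:ℝ)/2)) 2, ← Real.rpow_mul hn.le]
    norm_num
  have hmn2 : m - n = s^2 * (1 - u^2) := by
    rw [hudef, div_pow, mul_sub, mul_one, mul_div_cancel₀ _ (pow_ne_zero 2 hs.ne'), hs2, ht2]
  -- LHS
  have hLHS : m ^ (-(1/2) : ℝ) * (s - t)^(2*ν+2) = s^(2*ν+1) * (1-u)^(2*ν+2) := by
    have h1 : m ^ (-(1/2) : ℝ) = s⁻¹ := by rw [Real.rpow_neg hm.le, hsdef]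
    have h2 : s - t = s * (1-u) := by
      rw [hudef, mul_sub, mul_one, mul_div_cancel₀ _ hs.ne']
    rw [h1, h2, mul_pow, show 2*ν+2 = (2*ν+1)+1 by omega, pow_succ s (2*ν+1)]
    field_simp
  -- RHS, termwise
  have hRHS : ∀ μ ∈ range (ν+1),
      gammaBinom ((ν:ℝ)+1/2) (ν-μ) * gammaBinom ((ν:ℝ)+1/2) μ * m ^ (ν-μ) *
        (m ^ ((μ:ℝ) - 2*(ν:ℝ) - 1/2) * Pab (3+2*ν) (1/2 - (μ:ℝ)) (m-n) n -
          n ^ ((1:ℝ)/2 + (μ:ℝ)))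
      = s^(2*ν+1) * (gammaBinom ((ν:ℝ)+1/2) (ν-μ) * gammaBinom ((ν:ℝ)+1/2) μ *
          ((∑ j ∈ range (2*ν+2), gammaBinom ((j:ℝ) + (1/2 - (μ:ℝ)) - 2) j * (1 - u^2)^j)
            - u^(2*μ+1))) := by
    intro μ hμ
    have hμν : μ ≤ ν := by have := Finset.mem_range.mp hμ; omega
    have hP : Pab (3+2*ν) (1/2 - (μ:ℝ)) (m-n) n
        = s^(4*ν+2) * ∑ j ∈ range (2*ν+2), gammaBinom ((j:ℝ)+(1/2-(μ:ℝ))-2) j * (1-u^2)^j := by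
      rw [Pab, show 3+2*ν-1 = 2*ν+2 by omega, Finset.mul_sum]
      apply Finset.sum_congr rfl
      intro j hj
      have hj' : j < 2*ν+2 := Finset.mem_range.mp hj
      rw [sub_add_cancel, show 3+2*ν-j-2 = 2*ν+1-j by omega, hmn2, mul_pow, ← hs2]
      have hss : ((s^2)^j) * ((s^2)^(2*ν+1-j)) = s^(4*ν+2) := by
        rw [← pow_add, ← pow_mul, show 2*(j+(2*ν+1-j)) = 4*ν+2 by omega]
      linear_combination gammaBinom ((j:ℝ)+(1/2-(μ:ℝ))-2) j * (1-u^2)^j * hss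
    have hA : m ^ ((μ:ℝ) - 2*(ν:ℝ) - 1/2) * s^(4*ν+2) = s^(2*μ+1) := by
      have e1 : s^(4*ν+2) = m ^ ((2*ν+1 : ℕ):ℝ) := by
        rw [Real.rpow_natCast, ← hs2, ← pow_mul, show 2*(2*ν+1) = 4*ν+2 by omega]
      have e2 : s^(2*μ+1) = m ^ (((2*μ+1 : ℕ):ℝ) * ((1:ℝ)/2)) := by
        rw [mul_comm (((2*μ+1 : ℕ):ℝ)) ((1:ℝ)/2), Real.rpow_mul hm.le, ← hsdef,
          Real.rpow_natCast]
      rw [e1, e2, ← Real.rpow_add hm]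
      congr 1
      push_cast
      ring
    have hB : n ^ ((1:ℝ)/2 + (μ:ℝ)) = t^(2*μ+1) := by
      rw [show t^(2*μ+1) = n ^ (((2*μ+1 : ℕ):ℝ) * ((1:ℝ)/2)) from ?_]
      · congr 1
        push_cast
        ring
      · rw [mul_comm (((2*μ+1 : ℕ):ℝ)) ((1:ℝ)/2), Real.rpow_mul hn.le, ← htdef,
          Real.rpow_natCast]
    have hC : m ^ (ν-μ) = s^(2*(ν-μ)) := by rw [← hs2, ← pow_mul]
    have hpow : s^(2*(ν-μ)) * s^(2*μ+1) = s^(2*ν+1) := by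
      rw [← pow_add]
      congr 1
      omega
    have hD : s^(2*(ν-μ)) * t^(2*μ+1) = s^(2*ν+1) * u^(2*μ+1) := by
      rw [hudef, div_pow, ← hpow]
      field_simp
    rw [hP, hB, hC, ← mul_assoc (m ^ ((μ:ℝ) - 2*(ν:ℝ) - 1/2)), hA]
    set G : ℝ := ∑ j ∈ range (2*ν+2), gammaBinom ((j:ℝ)+(1/2-(μ:ℝ))-2) j * (1-u^2)^j
    linear_combination gammaBinom ((ν:ℝ)+1/2) (ν-μ) * gammaBinom ((ν:ℝ)+1/2) μ *
      (G * hpow - hD)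
  rw [Finset.sum_congr rfl hRHS, ← Finset.mul_sum, core ν u hu0 hu1, hLHS]
  ring
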